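/- The induced system of Ito's Farey natural extension on H_1 is isomorphic to the natural extension of the Gauss map: the map φ(x,y) = (x, (1-y)/y) conjugates the first-return map ℱ_{H_1} on H_1 = [0,1] × (1/2, 1] (given for x ≠ 0 by ℱ_{H_1}(x,y) = ℱ^{a(x)}(x,y) with a(x) = ⌊1/x⌋) to the map 𝒢(x,y) = (G(x), 1/(a(x)+y)) on [0,1]^2, and pushes forward the normalized restriction of the measure with density 1/(x+y-xy)^2 on H_1 to the measure with density 1/(log 2 (1+xy)^2) on [0,1]^2. -/

import Mathlib

open MeasureTheory

noncomputable section

/-- Ito's natural extension map of the Farey tent map on `Ω = [0,1]²`. -/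
def Fbar (p : ℝ × ℝ) : ℝ × ℝ :=
  if p.1 ≤ 1 / 2 then (p.1 / (1 - p.1), p.2 / (1 + p.2))
  else ((1 - p.1) / p.1, 1 / (1 + p.2))

/-- The conjugating map `φ(x,y) = (x, (1-y)/y)`. -/
def phi (p : ℝ × ℝ) : ℝ × ℝ := (p.1, (1 - p.2) / p.2)

/-- The natural extension of the Gauss map, `𝒢(x,y) = (G x, 1/(⌊1/x⌋ + y))`. -/
def Gmap (p : ℝ × ℝ) : ℝ × ℝ :=
  if p.1 = 0 then p
  else (1 / p.1 - ⌊1 / p.1⌋, 1 / ((⌊1 / p.1⌋ : ℝ) + p.2))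

/- ### Auxiliary lemmas -/

lemma det_prodMap_aux (f g : ℝ →ₗ[ℝ] ℝ) :
    LinearMap.det (f.prodMap g) = f.det * g.det := by
  let b : Module.Basis (Fin 1) ℝ ℝ := Module.Basis.singleton (Fin 1) ℝ
  rw [← LinearMap.det_toMatrix (b.prod b), LinearMap.toMatrix_prodMap b b f g,
    Matrix.det_fromBlocks_zero₂₁, LinearMap.det_toMatrix, LinearMap.det_toMatrix]

lemma det_phi_deriv (c : ℝ) :
    ((ContinuousLinearMap.id ℝ ℝ).prodMap ((1 : ℝ →L[ℝ] ℝ).smulRight c)).det = c := by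
  rw [ContinuousLinearMap.det, ContinuousLinearMap.coe_prodMap, det_prodMap_aux]
  have h1 : LinearMap.det ((ContinuousLinearMap.id ℝ ℝ : ℝ →L[ℝ] ℝ) : ℝ →ₗ[ℝ] ℝ) = 1 := by
    rw [ContinuousLinearMap.coe_id, LinearMap.det_id]
  have h2 : LinearMap.det (((1 : ℝ →L[ℝ] ℝ).smulRight c : ℝ →L[ℝ] ℝ) : ℝ →ₗ[ℝ] ℝ) = c :=
    by rw [show (1 : ℝ →L[ℝ] ℝ).smulRight c = ContinuousLinearMap.toSpanSingleton ℝ c by ext; simp]; exact ContinuousLinearMap.det_toSpanSingleton c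
  rw [h1, h2, one_mul]

lemma measurable_phi : Measurable phi :=
  measurable_fst.prodMk ((measurable_const.sub measurable_snd).div measurable_snd)

lemma map_withDensity_comp {α β : Type*} [MeasurableSpace α] [MeasurableSpace β]
    (ν : Measure α) {f : α → β} (hf : Measurable f) {h : β → ENNReal} (hh : Measurable h) :
    Measure.map f (ν.withDensity (h ∘ f)) = (Measure.map f ν).withDensity h := by
  ext t ht
  rw [Measure.map_apply hf ht, withDensity_apply _ (hf ht), withDensity_apply _ ht,
    setLIntegral_map ht hh hf]
  rfl

/-- The iterates of `Fbar` on the first branch. -/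
lemma Fbar_iter (x y : ℝ) (hx : 0 < x) (hy : 0 < y) :
    ∀ k : ℕ, ((k : ℝ) + 1) * x < 1 →
      Fbar^[k] (x, y) = (x / (1 - k * x), y / (1 + k * y)) := by
  intro k
  induction k with
  | zero => intro _; simp
  | succ k ih =>
    intro hk
    push_cast at hk
    have hk' : ((k : ℝ) + 1) * x < 1 := by nlinarith
    have h1 : (0:ℝ) < 1 - k * x := by nlinarith
    have h2 : (0:ℝ) < 1 + k * y := by positivity
    rw [Function.iterate_succ_apply', ih hk']
    have hcond : x / (1 - k * x) ≤ 1 / 2 := by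
      rw [div_le_div_iff₀ h1 (by norm_num)]
      nlinarith
    simp only [Fbar, hcond, if_true]
    have h3 : (1:ℝ) - x / (1 - k * x) ≠ 0 := by
      rw [sub_ne_zero]
      intro h
      rw [eq_comm, div_eq_one_iff_eq h1.ne'] at h
      nlinarith
    have h4 : (1:ℝ) + y / (1 + k * y) ≠ 0 := by positivity
    have h5 : (1:ℝ) + ((k:ℝ) + 1) * y ≠ 0 := by positivity
    have h6 : (1:ℝ) - ((k:ℝ) + 1) * x ≠ 0 := by nlinarith
    have e1 : (1:ℝ) - x / (1 - k*x) = (1 - ((k:ℝ)+1)*x)/(1-k*x) := by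
      rw [eq_div_iff h1.ne', sub_mul, div_mul_cancel₀ _ h1.ne']; ring
    have e2 : (1:ℝ) + y / (1 + k*y) = (1 + ((k:ℝ)+1)*y)/(1+k*y) := by
      field_simp; ring
    rw [Prod.mk.injEq]
    push_cast
    rw [e1, e2]
    constructor
    · rw [div_div_div_cancel_right₀]
      exact h1.ne'
    · rw [div_div_div_cancel_right₀]
      exact h2.ne'


lemma part1 (x y : ℝ) (hirr : Irrational x) (hx0 : 0 < x) (hx1 : x < 1)
    (hy1 : 1 / 2 < y) (hy2 : y ≤ 1) :
    phi (Fbar^[(⌊1 / x⌋).toNat] (x, y)) = Gmap (phi (x, y)) := by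
  have hy0 : (0:ℝ) < y := lt_trans (by norm_num) hy1
  set a : ℤ := ⌊1 / x⌋ with ha
  have hinv : (1:ℝ) < 1 / x := by rw [lt_div_iff₀ hx0]; linarith
  have ha1 : 1 ≤ a := by
    rw [ha]; exact Int.le_floor.2 (by exact_mod_cast hinv.le)
  have hfl : (a:ℝ) ≤ 1 / x := Int.floor_le _
  have hirr' : Irrational (1 / x) := by rw [one_div]; exact hirr.inv
  have hlt : (a:ℝ) < 1 / x := lt_of_le_of_ne hfl (Ne.symm (hirr'.ne_int a))
  have hax : (a:ℝ) * x < 1 := by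
    have := (lt_div_iff₀ hx0).1 hlt; linarith
  have hub : (1:ℝ) / x < (a:ℝ) + 1 := Int.lt_floor_add_one _
  have hax2 : (1:ℝ) < ((a:ℝ) + 1) * x := by
    have := (div_lt_iff₀ hx0).1 hub; linarith
  obtain ⟨m, hm⟩ : ∃ m : ℕ, a.toNat = m + 1 :=
    ⟨a.toNat - 1, (Nat.succ_pred_eq_of_pos (by omega)).symm⟩
  have hcastm : ((m:ℝ) + 1) = (a:ℝ) := by
    have h := congrArg (fun n : ℕ => ((n : ℤ) : ℝ)) hm
    rw [Int.toNat_of_nonneg (by omega : (0:ℤ) ≤ a)] at h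
    push_cast at h
    linarith
  have hmm : (m:ℝ) = (a:ℝ) - 1 := by linarith
  have hmx : ((m:ℝ) + 1) * x < 1 := by rw [hcastm]; exact hax
  rw [hm, Function.iterate_succ_apply', Fbar_iter x y hx0 hy0 m hmx]
  have h1 : (0:ℝ) < 1 - (m:ℝ) * x := by nlinarith
  have h1' : (0:ℝ) < 1 - ((a:ℝ) - 1) * x := by rw [← hmm]; exact h1
  have h2 : (0:ℝ) < 1 + (m:ℝ) * y := by positivity
  have h2' : (0:ℝ) < 1 + ((a:ℝ) - 1) * y := by rw [← hmm]; exact h2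
  have hcond : ¬ (x / (1 - (m:ℝ) * x) ≤ 1 / 2) := by
    rw [not_le, div_lt_div_iff₀ (by norm_num) h1]
    nlinarith
  have h3' : (0:ℝ) < 1 + y / (1 + ((a:ℝ) - 1) * y) := by positivity
  have h4 : (0:ℝ) < (a:ℝ) + (1 - y) / y := by
    have ha1' : (1:ℝ) ≤ (a:ℝ) := by exact_mod_cast ha1
    have e : (a:ℝ) + (1 - y) / y = ((a:ℝ) * y + 1 - y) / y := by field_simp; ring
    rw [e]
    apply div_pos _ hy0
    nlinarith
  simp only [Fbar, hcond, if_false, phi, Gmap]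
  simp only [hx0.ne', if_false]
  rw [Prod.mk.injEq]
  rw [hmm]
  have hLu : ∀ u : ℝ, 1 + u ≠ 0 → (1 - 1 / (1 + u)) / (1 / (1 + u)) = u := by
    intro u hu; field_simp; ring
  constructor
  · rw [← ha]
    generalize hd : 1 - ((a:ℝ) - 1) * x = d at h1' ⊢
    have hdn := h1'.ne'
    field_simp
    rw [← hd]; ring
  · have e2 : (a:ℝ) + (1 - y) / y = (1 + ((a:ℝ) - 1) * y) / y := by
      field_simp; ring
    rw [hLu (y / (1 + ((a:ℝ) - 1) * y)) h3'.ne', e2, one_div_div]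

lemma part2 :
    Measure.map phi
        ((volume.restrict (Set.Icc (0 : ℝ) 1 ×ˢ Set.Ioc (1 / 2 : ℝ) 1)).withDensity
          fun p => ENNReal.ofReal (1 / (Real.log 2 * (p.1 + p.2 - p.1 * p.2) ^ 2))) =
      (volume.restrict (Set.Icc (0 : ℝ) 1 ×ˢ Set.Icc (0 : ℝ) 1)).withDensity
        (fun p => ENNReal.ofReal (1 / (Real.log 2 * (1 + p.1 * p.2) ^ 2))) := by
  have hL : (0:ℝ) < Real.log 2 := Real.log_pos one_lt_two
  set s : Set (ℝ × ℝ) := Set.Icc (0:ℝ) 1 ×ˢ Set.Ioc (1/2 : ℝ) 1 with hs_def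
  have hs_meas : MeasurableSet s := measurableSet_Icc.prod measurableSet_Ioc
  set f' : ℝ × ℝ → ℝ × ℝ →L[ℝ] ℝ × ℝ := fun p =>
    (ContinuousLinearMap.id ℝ ℝ).prodMap ((1 : ℝ →L[ℝ] ℝ).smulRight (-(p.2 ^ 2)⁻¹)) with hf'_def
  set h : ℝ × ℝ → ENNReal := fun p => ENNReal.ofReal (1 / (Real.log 2 * (1 + p.1 * p.2) ^ 2))
    with hh_def
  have hh_meas : Measurable h := by
    apply ENNReal.measurable_ofReal.comp
    exact measurable_const.div
      (measurable_const.mul ((measurable_const.add (measurable_fst.mul measurable_snd)).pow_const 2))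
  have hdet : ∀ p : ℝ × ℝ, (f' p).det = -(p.2 ^ 2)⁻¹ := fun p => det_phi_deriv _
  have hdet_meas : Measurable fun p : ℝ × ℝ => ENNReal.ofReal |(f' p).det| := by
    simp only [hdet]
    exact ENNReal.measurable_ofReal.comp (((measurable_snd.pow_const 2).inv.neg).abs)
  have hder : ∀ p ∈ s, HasFDerivWithinAt phi (f' p) s p := by
    intro p hp
    have hp2 : (0:ℝ) < p.2 := lt_trans (by norm_num) hp.2.1
    have hψ : HasDerivAt (fun y : ℝ => (1 - y) / y) (-(p.2 ^ 2)⁻¹) p.2 := by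
      have h0 : HasDerivAt (fun y : ℝ => y⁻¹ - 1) (-(p.2 ^ 2)⁻¹) p.2 :=
        (hasDerivAt_inv hp2.ne').sub_const 1
      apply h0.congr_of_eventuallyEq
      filter_upwards [eventually_ne_nhds hp2.ne'] with z hz
      field_simp
    have hF : HasFDerivAt (Prod.map (fun x : ℝ => x) (fun y : ℝ => (1 - y) / y)) (f' p) p :=
      (hasFDerivAt_id p.1).prodMap p hψ.hasFDerivAt
    exact hF.hasFDerivWithinAt
  have hinj : Set.InjOn phi s := by
    intro p hp q hq hpq
    have hp2 : (0:ℝ) < p.2 := lt_trans (by norm_num) hp.2.1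
    have hq2 : (0:ℝ) < q.2 := lt_trans (by norm_num) hq.2.1
    simp only [phi, Prod.mk.injEq] at hpq
    obtain ⟨h1, h2⟩ := hpq
    rw [div_eq_div_iff hp2.ne' hq2.ne'] at h2
    have : p.2 = q.2 := by nlinarith
    exact Prod.ext h1 this
  have himg : phi '' s = Set.Icc (0:ℝ) 1 ×ˢ Set.Ico (0:ℝ) 1 := by
    ext q
    constructor
    · rintro ⟨p, hp, rfl⟩
      have hp2 : (0:ℝ) < p.2 := lt_trans (by norm_num) hp.2.1
      simp only [phi, Set.mem_prod, Set.mem_Icc, Set.mem_Ico]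
      refine ⟨⟨hp.1.1, hp.1.2⟩, ?_, ?_⟩
      · exact div_nonneg (by linarith [hp.2.2]) hp2.le
      · rw [div_lt_one hp2]
        linarith [hp.2.1]
    · rintro ⟨hq1, hq2⟩
      refine ⟨(q.1, 1 / (1 + q.2)), ⟨hq1, ?_, ?_⟩, ?_⟩
      · rw [div_lt_div_iff₀ (by norm_num) (by linarith [hq2.1] : (0:ℝ) < 1 + q.2)]
        linarith [hq2.2]
      · rw [div_le_one (by linarith [hq2.1] : (0:ℝ) < 1 + q.2)]
        linarith [hq2.1]
      · have hpos : (0:ℝ) < 1 + q.2 := by linarith [hq2.1]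
        simp only [phi]
        rw [Prod.mk.injEq]
        refine ⟨rfl, ?_⟩
        field_simp
        ring
  have key := map_withDensity_abs_det_fderiv_eq_addHaar volume hs_meas.nullMeasurableSet hder hinj
  have hnull : (Set.Icc (0:ℝ) 1 ×ˢ Set.Ico (0:ℝ) 1 : Set (ℝ × ℝ)) =ᵐ[volume]
      (Set.Icc (0:ℝ) 1 ×ˢ Set.Icc (0:ℝ) 1 : Set (ℝ × ℝ)) := by
    apply MeasureTheory.ae_eq_set.2
    constructor
    · rw [Set.diff_eq_empty.2 (Set.prod_mono subset_rfl Set.Ico_subset_Icc_self)]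
      exact measure_empty
    · have hn : volume ((Set.univ : Set ℝ) ×ˢ ({1} : Set ℝ)) = 0 := by
        rw [Measure.volume_eq_prod, Measure.prod_prod]
        simp
      refine measure_mono_null ?_ hn
      rintro ⟨u, v⟩ ⟨⟨hu, hv⟩, hnot⟩
      simp only [Set.mem_prod, Set.mem_univ, Set.mem_singleton_iff, true_and]
      by_contra hv1
      exact hnot ⟨hu, hv.1, lt_of_le_of_ne hv.2 hv1⟩
  have hae : (fun p : ℝ × ℝ => ENNReal.ofReal (1 / (Real.log 2 * (p.1 + p.2 - p.1 * p.2) ^ 2)))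
      =ᵐ[volume.restrict s] fun p => ENNReal.ofReal |(f' p).det| * h (phi p) := by
    apply Filter.eventuallyEq_of_mem (MeasureTheory.self_mem_ae_restrict hs_meas)
    rintro ⟨u, v⟩ ⟨hu, hv⟩
    have hv0 : (0:ℝ) < v := lt_trans (by norm_num) hv.1
    have hd : (0:ℝ) < u + v - u * v := by nlinarith [hu.1, hu.2, hv.1, hv.2]
    simp only [hdet, phi, hh_def]
    rw [← ENNReal.ofReal_mul (by positivity : (0:ℝ) ≤ |(-(v ^ 2)⁻¹)|)]
    congr 1
    rw [abs_neg, abs_of_nonneg (by positivity : (0:ℝ) ≤ ((v:ℝ) ^ 2)⁻¹)]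
    have he : (1:ℝ) + u * ((1 - v) / v) = (u + v - u * v) / v := by field_simp; ring
    rw [he, div_pow]
    field_simp
  calc Measure.map phi ((volume.restrict s).withDensity
        fun p => ENNReal.ofReal (1 / (Real.log 2 * (p.1 + p.2 - p.1 * p.2) ^ 2)))
      = Measure.map phi ((volume.restrict s).withDensity
          ((fun p => ENNReal.ofReal |(f' p).det|) * (h ∘ phi))) := by
        rw [withDensity_congr_ae hae]; rfl
    _ = Measure.map phi (((volume.restrict s).withDensity
          (fun p => ENNReal.ofReal |(f' p).det|)).withDensity (h ∘ phi)) := by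
        rw [withDensity_mul _ hdet_meas (hh_meas.comp measurable_phi)]
    _ = (Measure.map phi ((volume.restrict s).withDensity
          (fun p => ENNReal.ofReal |(f' p).det|))).withDensity h :=
        map_withDensity_comp _ measurable_phi hh_meas
    _ = (volume.restrict (phi '' s)).withDensity h := by rw [key]
    _ = (volume.restrict (Set.Icc (0:ℝ) 1 ×ˢ Set.Icc (0:ℝ) 1)).withDensity h := by
        rw [himg, Measure.restrict_congr_set hnull]


/-- Brown–Yin: the induced (first-return) system of Ito's Farey natural extension on
`H_1 = [0,1] × (1/2,1]` is isomorphic to the natural extension of the Gauss map.  The map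
`φ(x,y) = (x, (1-y)/y)` conjugates the first-return map `ℱ_{H_1}(x,y) = ℱ^{a(x)}(x,y)`
(`a(x) = ⌊1/x⌋`) to `𝒢`, and pushes forward the normalized restriction to `H_1` of the
measure with density `1/(x+y-xy)²` (total mass `log 2` on `H_1`) to the measure with density
`1/(log 2 (1+xy)²)` on `[0,1]²`. -/
theorem stmt17 :
    (∀ x y : ℝ, Irrational x → 0 < x → x < 1 → 1 / 2 < y → y ≤ 1 →
      phi (Fbar^[(⌊1 / x⌋).toNat] (x, y)) = Gmap (phi (x, y))) ∧
    Measure.map phi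
        ((volume.restrict (Set.Icc (0 : ℝ) 1 ×ˢ Set.Ioc (1 / 2 : ℝ) 1)).withDensity
          fun p => ENNReal.ofReal (1 / (Real.log 2 * (p.1 + p.2 - p.1 * p.2) ^ 2))) =
      (volume.restrict (Set.Icc (0 : ℝ) 1 ×ˢ Set.Icc (0 : ℝ) 1)).withDensity
        (fun p => ENNReal.ofReal (1 / (Real.log 2 * (1 + p.1 * p.2) ^ 2))) := by
  exact ⟨part1, part2⟩

end
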